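/- Suppose each project valuation v_k is monotone and submodular with v_k(∅)=0. Let S be an allocation and p a payment vector such that (i) for every project k, Σ_{i∈S_k} p_i = v_k(S_k), and (ii) for every project k and every agent i ∉ S_k, p_i ≥ v_k(S_k ∪ {i}) − v_k(S_k). Then (S, p) is core stable: it is budget-balanced, and for every project k and every set T ⊆ 𝒩, v_k(S_k ∪ T) ≤ Σ_{i ∈ S_k ∪ T} p_i. -/

import Mathlib

/-- For monotone submodular valuations: if the payments on each project sum exactly to
the project's value, and each outside agent's payment dominates her marginal value to
the project, then the solution is core stable (budget-balanced and stable). -/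
theorem stmt2 {𝒩 P : Type*} [Fintype 𝒩] [DecidableEq 𝒩] [Fintype P]
    (v : P → Finset 𝒩 → ℝ)
    (hzero : ∀ k, v k ∅ = 0)
    (hnonneg : ∀ k (T : Finset 𝒩), 0 ≤ v k T)
    (hmono : ∀ k (A B : Finset 𝒩), A ⊆ B → v k A ≤ v k B)
    (hsubmod : ∀ k (A B : Finset 𝒩) (i : 𝒩), A ⊆ B →
      v k (insert i B) - v k B ≤ v k (insert i A) - v k A)
    -- S is an allocation
    (S : P → Finset 𝒩)
    (hdisj : ∀ k l, k ≠ l → Disjoint (S k) (S l))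
    (hcover : Finset.univ.biUnion S = Finset.univ)
    -- p is a payment vector
    (p : 𝒩 → ℝ) (hp : ∀ i, 0 ≤ p i)
    -- (i) payments on each project sum to the project's value
    (hsum : ∀ k, ∑ i ∈ S k, p i = v k (S k))
    -- (ii) outside agents' payments dominate their marginal values
    (hmarg : ∀ k (i : 𝒩), i ∉ S k → v k (insert i (S k)) - v k (S k) ≤ p i) :
    -- budget balance
    (∑ i, p i = ∑ k, v k (S k)) ∧
    -- stability
    (∀ k (T : Finset 𝒩), v k (S k ∪ T) ≤ ∑ i ∈ S k ∪ T, p i) := by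
  constructor
  · rw [← hcover, Finset.sum_biUnion]
    · exact Finset.sum_congr rfl fun k _ => hsum k
    · intro k _ l _ hkl
      exact hdisj k l hkl
  · intro k T
    have key : ∀ U : Finset 𝒩, v k (S k ∪ U) ≤ v k (S k) + ∑ i ∈ U \ S k, p i := by
      intro U
      induction U using Finset.induction_on with
      | empty => simp
      | insert _ _ hiU _ =>
        rename_i i U ih
        by_cases hiS : i ∈ S k
        · have h1 : S k ∪ insert i U = S k ∪ U := by
            ext x; by_cases hx : x = i <;> simp [hx, hiS] <;> tauto
          have h2 : insert i U \ S k = U \ S k := by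
            ext x; by_cases hx : x = i <;> simp [hx, hiS] <;> tauto
          rw [h1, h2]; exact ih
        · have h1 : S k ∪ insert i U = insert i (S k ∪ U) := by
            ext x; by_cases hx : x = i <;> simp [hx, hiS] <;> tauto
          have h2 : insert i U \ S k = insert i (U \ S k) := by
            ext x; by_cases hx : x = i <;> simp [hx, hiS] <;> tauto
          have hiU' : i ∉ U \ S k := by simp [hiU]
          rw [h1, h2, Finset.sum_insert hiU']
          have := hsubmod k (S k) (S k ∪ U) i (Finset.subset_union_left)
          have := hmarg k i hiS
          linarith
    have hT : v k (S k ∪ T) ≤ v k (S k) + ∑ i ∈ T \ S k, p i := key T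
    have : ∑ i ∈ S k ∪ T, p i = ∑ i ∈ S k, p i + ∑ i ∈ T \ S k, p i := by
      rw [← Finset.sum_union (Finset.disjoint_sdiff), Finset.union_sdiff_self_eq_union]
    rw [this, hsum k]
    exact hT
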